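/- For every argumentation framework F = (A, R), every S ⊆ A, every a ∈ A, and every ordinal α: C_S^α(a) = {b ∈ A | there is a directed R-path from a to b and a directed R-path from b to a, both lying entirely within A \ Δ^α_{F,S}}. -/

import Mathlib

/-!
Basic notions of abstract argumentation frameworks, following
Andrews–San Mauro, "SCC-recursiveness in infinite argumentation".
-/

universe u

/-- An argumentation framework: a set `A` of arguments together with an
attack relation `R ⊆ A × A`. -/
structure AF (α : Type u) where
  A : Set α
  R : α → α → Prop
  attack_mem : ∀ ⦃a b : α⦄, R a b → a ∈ A ∧ b ∈ A

namespace AF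

variable {α : Type u}

/-- The restriction `F↾U = (A ∩ U, R ∩ (U × U))`. -/
def restrict (F : AF α) (U : Set α) : AF α where
  A := F.A ∩ U
  R a b := F.R a b ∧ a ∈ U ∧ b ∈ U
  attack_mem := by
    intro a b h
    exact ⟨⟨(F.attack_mem h.1).1, h.2.1⟩, ⟨(F.attack_mem h.1).2, h.2.2⟩⟩

/-- `S` is conflict-free: `S ⊆ A` and no argument of `S` attacks another. -/
def ConflictFree (F : AF α) (S : Set α) : Prop :=
  S ⊆ F.A ∧ ∀ a ∈ S, ∀ b ∈ S, ¬ F.R a b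

/-- `S` is a naive extension: conflict-free and ⊆-maximal among conflict-free sets. -/
def Naive (F : AF α) (S : Set α) : Prop :=
  ConflictFree F S ∧ ∀ T, ConflictFree F T → S ⊆ T → S = T

/-- `S⁺`: the set of arguments attacked by `S`. -/
def plus (F : AF α) (S : Set α) : Set α := {x | ∃ y ∈ S, F.R y x}

/-- The range `S⊕ = S ∪ S⁺`. -/
def rng (F : AF α) (S : Set α) : Set α := S ∪ plus F S

/-- `S` is a stage extension: conflict-free with ⊆-maximal range among
conflict-free sets. -/
def Stage (F : AF α) (S : Set α) : Prop :=
  ConflictFree F S ∧ ¬ ∃ T, ConflictFree F T ∧ rng F S ⊂ rng F T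

/-- `F` is finitary: every argument has finitely many attackers. -/
def Finitary (F : AF α) : Prop := ∀ a, {x | F.R x a}.Finite

/-- There is a directed path from `a` to `b` in `F` (both being arguments of `F`). -/
def Reach (F : AF α) (a b : α) : Prop :=
  a ∈ F.A ∧ b ∈ F.A ∧ Relation.ReflTransGen F.R a b

/-- The strongly connected component of `a` in `F`. -/
def SCCof (F : AF α) (a : α) : Set α := {b | Reach F a b ∧ Reach F b a}

/-- `X` is a strongly connected component of `F`. -/
def IsSCC (F : AF α) (X : Set α) : Prop := ∃ a ∈ F.A, X = SCCof F a

/-- `D_S(X)`: the elements of `X` attacked by an element of `S` outside `X`. -/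
def Dset (F : AF α) (S X : Set α) : Set α := {b ∈ X | ∃ a ∈ S \ X, F.R a b}

/-- `S` is a cf1.5-extension of `F`. -/
def CF15 (F : AF α) (S : Set α) : Prop :=
  ConflictFree F S ∧
    ∀ X, IsSCC F X → Naive (F.restrict (X \ Dset F S X)) (S ∩ X)

/-- `S` is a stg1.5-extension of `F`. -/
def STG15 (F : AF α) (S : Set α) : Prop :=
  ConflictFree F S ∧
    ∀ X, IsSCC F X → Stage (F.restrict (X \ Dset F S X)) (S ∩ X)

/-- `C_S^α(a)`, defined by transfinite recursion. -/
noncomputable def Cseq (F : AF α) (S : Set α) (a : α) (o : Ordinal.{0}) : Set α :=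
  Ordinal.limitRecOn o (SCCof F a)
    (fun _ C => SCCof (F.restrict (C \ Dset F S C)) a)
    (fun o' _ ih => SCCof (F.restrict (⋂ β : {β : Ordinal.{0} // β < o'}, ih β.1 β.2)) a)

/-- The component ordinal `α_S(a)`: the least `α` with `a ∉ C_S^α(a)` or
`C_S^{α+1}(a) = C_S^α(a)`. -/
noncomputable def alphaS (F : AF α) (S : Set α) (a : α) : Ordinal.{0} :=
  sInf {o | a ∉ Cseq F S a o ∨ Cseq F S a (o + 1) = Cseq F S a o}

/-- `S` is an icft-extension (tfcf2-extension) of `F`. -/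
def ICFT (F : AF α) (S : Set α) : Prop :=
  ConflictFree F S ∧ ∀ a ∈ F.A,
    a ∉ Cseq F S a (alphaS F S a) ∨
      Naive (F.restrict (Cseq F S a (alphaS F S a))) (S ∩ Cseq F S a (alphaS F S a))

/-- `S` is an istgt-extension (tf-stg2-extension) of `F`. -/
def ISTGT (F : AF α) (S : Set α) : Prop :=
  ConflictFree F S ∧ ∀ a ∈ F.A,
    a ∉ Cseq F S a (alphaS F S a) ∨
      Stage (F.restrict (Cseq F S a (alphaS F S a))) (S ∩ Cseq F S a (alphaS F S a))

/-- The characteristic function `f_F`. -/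
def charF (F : AF α) (S : Set α) : Set α :=
  {x ∈ F.A | ∀ y, F.R y x → ∃ z ∈ S, F.R z y}

/-- `G` is the grounded extension of `F`: the least fixed point of `f_F`. -/
def IsGrounded (F : AF α) (G : Set α) : Prop :=
  charF F G = G ∧ ∀ T, charF F T = T → G ⊆ T

/-- `conf(F)`: the set of conflicting pairs of `F`. -/
def confl (F : AF α) : Set (α × α) := {p | F.R p.1 p.2 ∨ F.R p.2 p.1}

/-- The operator `Δ_{F,S}(D)`. -/
def DeltaOp (F : AF α) (S D : Set α) : Set α :=
  {a ∈ F.A | ∃ b ∈ S, F.R b a ∧ ¬ Reach (F.restrict (F.A \ D)) a b}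

/-- `Δ^α_{F,S}`, defined by transfinite recursion. -/
noncomputable def Deltaseq (F : AF α) (S : Set α) (o : Ordinal.{0}) : Set α :=
  Ordinal.limitRecOn o (∅ : Set α)
    (fun _ D => DeltaOp F S D)
    (fun o' _ ih => ⋃ β : {β : Ordinal.{0} // β < o'}, ih β.1 β.2)

/-- The least fixed point `Δ_{F,S}` of the monotone operator `Δ_{F,S}(·)`,
given by Knaster–Tarski as the intersection of all prefixed points. -/
def DeltaFix (F : AF α) (S : Set α) : Set α :=
  ⋂₀ {D | DeltaOp F S D ⊆ D}

end AF


namespace AF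

variable {α : Type u}

lemma reach_mono' (F : AF α) {U V : Set α} (h : U ⊆ V) {a b : α}
    (hr : Reach (F.restrict U) a b) : Reach (F.restrict V) a b := by
  obtain ⟨ha, hb, hp⟩ := hr
  exact ⟨⟨ha.1, h ha.2⟩, ⟨hb.1, h hb.2⟩,
    Relation.ReflTransGen.mono (fun x y hxy => ⟨hxy.1, h hxy.2.1, h hxy.2.2⟩) _ _ hp⟩

lemma reach_trans' {F : AF α} {a b c : α} (h1 : Reach F a b) (h2 : Reach F b c) :
    Reach F a c := ⟨h1.1, h2.2.1, h1.2.2.trans h2.2.2⟩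

lemma reach_single' {F : AF α} {a b : α} (h : F.R a b) : Reach F a b :=
  ⟨(F.attack_mem h).1, (F.attack_mem h).2, Relation.ReflTransGen.single h⟩

lemma reach_cycle_aux (F : AF α) {U V : Set α} {a : α}
    (hV : ∀ v, Reach (F.restrict U) a v → Reach (F.restrict U) v a → v ∈ V)
    {x y : α} (h : Relation.ReflTransGen (F.restrict U).R x y)
    (hya : Reach (F.restrict U) y a) :
    Reach (F.restrict U) a x → Relation.ReflTransGen (F.restrict V).R x y := by
  induction h using Relation.ReflTransGen.head_induction_on with
  | refl => exact fun _ => Relation.ReflTransGen.refl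
  | head h' hrest ih =>
    rename_i p q
    intro hap
    have hpq : Reach (F.restrict U) p q := reach_single' h'
    have haq : Reach (F.restrict U) a q := reach_trans' hap hpq
    have hqa : Reach (F.restrict U) q a :=
      reach_trans' ⟨hpq.2.1, hya.1, hrest⟩ hya
    have hpa : Reach (F.restrict U) p a := reach_trans' hpq hqa
    exact Relation.ReflTransGen.head ⟨h'.1, hV p hap hpa, hV q haq hqa⟩ (ih haq)

lemma reach_cycle (F : AF α) {U V : Set α} {a b : α}
    (hab : Reach (F.restrict U) a b) (hba : Reach (F.restrict U) b a)
    (hV : ∀ v, Reach (F.restrict U) a v → Reach (F.restrict U) v a → v ∈ V) :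
    Reach (F.restrict V) a b ∧ Reach (F.restrict V) b a := by
  have haa : Reach (F.restrict U) a a := reach_trans' hab hba
  have haV : a ∈ V := hV a haa haa
  have hbV : b ∈ V := hV b hab hba
  exact ⟨⟨⟨hab.1.1, haV⟩, ⟨hab.2.1.1, hbV⟩, reach_cycle_aux F hV hab.2.2 hba haa⟩,
    ⟨⟨hab.2.1.1, hbV⟩, ⟨hab.1.1, haV⟩, reach_cycle_aux F hV hba.2.2 haa hab⟩⟩

lemma reach_restrict_self (F : AF α) {a b : α} :
    Reach (F.restrict F.A) a b ↔ Reach F a b := by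
  constructor
  · rintro ⟨ha, hb, hp⟩
    exact ⟨ha.1, hb.1, Relation.ReflTransGen.mono (fun x y h => h.1) _ _ hp⟩
  · rintro ⟨ha, hb, hp⟩
    exact ⟨⟨ha, ha⟩, ⟨hb, hb⟩,
      Relation.ReflTransGen.mono (fun x y h => ⟨h, (F.attack_mem h).1, (F.attack_mem h).2⟩) _ _ hp⟩

lemma Deltaseq_zero (F : AF α) (S : Set α) : Deltaseq F S 0 = ∅ :=
  Ordinal.limitRecOn_zero _ _ _

lemma Deltaseq_succ (F : AF α) (S : Set α) (o : Ordinal.{0}) :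
    Deltaseq F S (Order.succ o) = DeltaOp F S (Deltaseq F S o) :=
  Ordinal.limitRecOn_succ _ _ _ _

lemma Deltaseq_limit (F : AF α) (S : Set α) {o : Ordinal.{0}} (h : Order.IsSuccLimit o) :
    Deltaseq F S o = ⋃ β : {β : Ordinal.{0} // β < o}, Deltaseq F S β.1 :=
  Ordinal.limitRecOn_limit _ _ _ _ h

lemma Cseq_zero (F : AF α) (S : Set α) (a : α) : Cseq F S a 0 = SCCof F a :=
  Ordinal.limitRecOn_zero _ _ _

lemma Cseq_succ (F : AF α) (S : Set α) (a : α) (o : Ordinal.{0}) :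
    Cseq F S a (Order.succ o) =
      SCCof (F.restrict (Cseq F S a o \ Dset F S (Cseq F S a o))) a :=
  Ordinal.limitRecOn_succ _ _ _ _

lemma Cseq_limit (F : AF α) (S : Set α) (a : α) {o : Ordinal.{0}} (h : Order.IsSuccLimit o) :
    Cseq F S a o =
      SCCof (F.restrict (⋂ β : {β : Ordinal.{0} // β < o}, Cseq F S a β.1)) a :=
  Ordinal.limitRecOn_limit _ _ _ _ h

lemma deltaOp_mono (F : AF α) (S : Set α) {D D' : Set α} (h : D ⊆ D') :
    DeltaOp F S D ⊆ DeltaOp F S D' := by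
  rintro x ⟨hxA, b, hbS, hRb, hnr⟩
  exact ⟨hxA, b, hbS, hRb,
    fun hr => hnr (reach_mono' F (Set.diff_subset_diff_right h) hr)⟩

lemma deltaseq_prog (F : AF α) (S : Set α) (o : Ordinal.{0}) :
    Deltaseq F S o ⊆ DeltaOp F S (Deltaseq F S o) := by
  induction o using Ordinal.limitRecOn with
  | zero => rw [Deltaseq_zero]; exact Set.empty_subset _
  | add_one o ih =>
    rw [Ordinal.add_one_eq_succ, Deltaseq_succ]
    exact deltaOp_mono F S ih
  | limit o ho ih =>
    rw [Deltaseq_limit F S ho]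
    intro x hx
    obtain ⟨β, hβ⟩ := Set.mem_iUnion.1 hx
    refine deltaOp_mono F S ?_ (ih β.1 β.2 hβ)
    exact Set.subset_iUnion (fun β : {β : Ordinal.{0} // β < o} => Deltaseq F S β.1) β

lemma succ_step (F : AF α) (S : Set α) (a : α) (Δ : Set α)
    (hprog : Δ ⊆ DeltaOp F S Δ) (C : Set α)
    (hC : C = {b | Reach (F.restrict (F.A \ Δ)) a b ∧ Reach (F.restrict (F.A \ Δ)) b a}) :
    SCCof (F.restrict (C \ Dset F S C)) a =
      {b | Reach (F.restrict (F.A \ DeltaOp F S Δ)) a b ∧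
           Reach (F.restrict (F.A \ DeltaOp F S Δ)) b a} := by
  set G := F.restrict (F.A \ Δ) with hG
  have hmem : ∀ v ∈ C, Reach G a v ∧ Reach G v a := fun v hv => by rw [hC] at hv; exact hv
  have hCsub : C ⊆ F.A \ Δ := fun v hv => (hmem v hv).1.2.1.2
  have hreachC : ∀ x ∈ C, ∀ y ∈ C, Reach G x y := fun x hx y hy =>
    reach_trans' (hmem x hx).2 (hmem y hy).1
  have hDsub : Dset F S C ⊆ DeltaOp F S Δ := by
    rintro d ⟨hdC, s, ⟨hsS, hsnC⟩, hRsd⟩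
    refine ⟨(hCsub hdC).1, s, hsS, hRsd, fun hr => hsnC ?_⟩
    have hsd : Reach G s d :=
      ⟨hr.2.1, hr.1, Relation.ReflTransGen.single ⟨hRsd, hr.2.1.2, hCsub hdC⟩⟩
    rw [hC]
    exact ⟨reach_trans' (hmem d hdC).1 hr, reach_trans' hsd (hmem d hdC).2⟩
  have hCD : C \ Dset F S C ⊆ F.A \ DeltaOp F S Δ := by
    rintro v ⟨hvC, hvD⟩
    refine ⟨(hCsub hvC).1, fun hvΔ => ?_⟩
    obtain ⟨_, s, hsS, hRsv, hnr⟩ := hvΔ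
    by_cases hsC : s ∈ C
    · exact hnr (hreachC v hvC s hsC)
    · exact hvD ⟨hvC, s, ⟨hsS, hsC⟩, hRsv⟩
  ext b
  simp only [SCCof, Set.mem_setOf_eq]
  constructor
  · rintro ⟨h1, h2⟩
    exact ⟨reach_mono' F hCD h1, reach_mono' F hCD h2⟩
  · rintro ⟨h1, h2⟩
    refine reach_cycle F h1 h2 ?_
    intro v hav hva
    have hsub : F.A \ DeltaOp F S Δ ⊆ F.A \ Δ := Set.diff_subset_diff_right hprog
    have hvC : v ∈ C := by
      rw [hC]; exact ⟨reach_mono' F hsub hav, reach_mono' F hsub hva⟩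
    exact ⟨hvC, fun hvD => hav.2.1.2.2 (hDsub hvD)⟩

end AF

/-- `C_S^α(a)` consists exactly of the `b` that are reachable
from `a` and reach back `a` via paths lying entirely within `A \ Δ^α_{F,S}`. -/
theorem statement18 {α : Type u} (F : AF α) (S : Set α) (a : α) (o : Ordinal.{0}) :
    AF.Cseq F S a o =
      {b | AF.Reach (F.restrict (F.A \ AF.Deltaseq F S o)) a b ∧
           AF.Reach (F.restrict (F.A \ AF.Deltaseq F S o)) b a} := by
  induction o using Ordinal.limitRecOn with
  | zero =>
    rw [AF.Cseq_zero, AF.Deltaseq_zero, Set.diff_empty]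
    ext b
    simp only [AF.SCCof, Set.mem_setOf_eq, AF.reach_restrict_self]
  | add_one o ih =>
    rw [Ordinal.add_one_eq_succ, AF.Cseq_succ, AF.Deltaseq_succ]
    exact AF.succ_step F S a (AF.Deltaseq F S o) (AF.deltaseq_prog F S o) _ ih
  | limit o ho ih =>
    rw [AF.Cseq_limit F S a ho, AF.Deltaseq_limit F S ho]
    have hCA : ∀ β, β < o → AF.Cseq F S a β ⊆ F.A \ AF.Deltaseq F S β := by
      intro β h v hv
      rw [ih β h] at hv
      exact hv.1.2.1.2
    have hUsub : (⋂ β : {β : Ordinal.{0} // β < o}, AF.Cseq F S a β.1) ⊆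
        F.A \ ⋃ β : {β : Ordinal.{0} // β < o}, AF.Deltaseq F S β.1 := by
      intro v hv
      refine ⟨(hCA 0 ho.pos (Set.mem_iInter.1 hv ⟨0, ho.pos⟩)).1, fun hmem => ?_⟩
      obtain ⟨β, hvt⟩ := Set.mem_iUnion.1 hmem
      exact (hCA β.1 β.2 (Set.mem_iInter.1 hv β)).2 hvt
    ext b
    simp only [AF.SCCof, Set.mem_setOf_eq]
    constructor
    · rintro ⟨h1, h2⟩
      exact ⟨AF.reach_mono' F hUsub h1, AF.reach_mono' F hUsub h2⟩
    · rintro ⟨h1, h2⟩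
      refine AF.reach_cycle F h1 h2 ?_
      intro v hav hva
      refine Set.mem_iInter.2 fun β => ?_
      have hsub : F.A \ (⋃ β : {β : Ordinal.{0} // β < o}, AF.Deltaseq F S β.1) ⊆
          F.A \ AF.Deltaseq F S β.1 :=
        Set.diff_subset_diff_right
          (Set.subset_iUnion (fun β : {β : Ordinal.{0} // β < o} => AF.Deltaseq F S β.1) β)
      rw [ih β.1 β.2]
      exact ⟨AF.reach_mono' F hsub hav, AF.reach_mono' F hsub hva⟩
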